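/- Let n ≥ 2 and let F ⊆ [n] satisfy | |F ∩ [x]| - ⌊x/2⌋ | ≤ √(n log n) for all x ∈ [n]. If x_F is a (p,q)-cut point of F (p, q positive integers), then |x_F - (p/(p+q))·n| ≤ 8(p+q)/min(p,q) · √(n log n); in particular for p ≤ q, |x_F - (p/(p+q))n| = O(√(n log n)). -/

import Mathlib

open Finset Real

theorem cut_aux (P Q X N A B Fc s : ℝ) (hP : 0 < P) (hQ : 0 < Q) (hs1 : 1 ≤ s)
    (hsplit : A + B = Fc) (hA1 : A ≤ X/2 + s + 1/2) (hA2 : X/2 - s - 1/2 ≤ A)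
    (hT1 : Fc ≤ N/2 + s + 1/2) (hT2 : N/2 - s - 1/2 ≤ Fc)
    (hD0 : A*Q ≤ (N - X - B)*P) (hD1 : (N - X - B)*P < (A+1)*Q) :
    |(P+Q)*X - P*N| ≤ 8*s*(P+Q) := by
  have m1 := mul_le_mul_of_nonneg_left hA1 hP.le
  have m2 := mul_le_mul_of_nonneg_left hA2 hP.le
  have m3 := mul_le_mul_of_nonneg_left hA1 hQ.le
  have m4 := mul_le_mul_of_nonneg_left hA2 hQ.le
  have m5 := mul_le_mul_of_nonneg_left hT1 hP.le
  have m6 := mul_le_mul_of_nonneg_left hT2 hP.le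
  have m7 := mul_le_mul_of_nonneg_left hs1 hP.le
  have m8 := mul_le_mul_of_nonneg_left hs1 hQ.le
  rw [abs_le]
  constructor
  · nlinarith [hD1, hsplit, m1, m2, m3, m4, m5, m6, m7, m8]
  · nlinarith [hD0, hsplit, m1, m2, m3, m4, m5, m6, m7, m8]

set_option maxHeartbeats 1000000 in
/-- A cut point of a balanced set lies near `(p/(p+q))·n`. -/
theorem cut_point_location (n p q xF : ℕ) (hn : 2 ≤ n) (hp : 0 < p) (hq : 0 < q)
    (F : Finset ℕ) (hF : F ⊆ Finset.Icc 1 n) (hxF : xF ∈ Finset.Icc 1 n)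
    (hbal : ∀ x ∈ Finset.Icc 1 n,
      |((F ∩ Finset.Icc 1 x).card : ℝ) - ((x / 2 : ℕ) : ℝ)| ≤
        Real.sqrt ((n : ℝ) * Real.log n))
    (hcut :
      0 ≤ ((n : ℝ) - (xF : ℝ) - ((F ∩ Finset.Icc (xF + 1) n).card : ℝ)) / (q : ℝ)
            - ((F ∩ Finset.Icc 1 xF).card : ℝ) / (p : ℝ) ∧
      ((n : ℝ) - (xF : ℝ) - ((F ∩ Finset.Icc (xF + 1) n).card : ℝ)) / (q : ℝ)
            - ((F ∩ Finset.Icc 1 xF).card : ℝ) / (p : ℝ) < 1 / (p : ℝ)) :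
    |(xF : ℝ) - (p : ℝ) / ((p : ℝ) + (q : ℝ)) * (n : ℝ)| ≤
      8 * ((p : ℝ) + (q : ℝ)) / ((min p q : ℕ) : ℝ) *
        Real.sqrt ((n : ℝ) * Real.log n) := by
  obtain ⟨hc0, hc1⟩ := hcut
  obtain ⟨hx1, hxn⟩ := Finset.mem_Icc.mp hxF
  have hp0 : (0:ℝ) < p := by exact_mod_cast hp
  have hq0 : (0:ℝ) < q := by exact_mod_cast hq
  have hn2 : (2:ℝ) ≤ n := by exact_mod_cast hn
  -- s ≥ 1
  have hs1 : (1:ℝ) ≤ Real.sqrt ((n : ℝ) * Real.log n) := by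
    rw [show (1:ℝ) = Real.sqrt 1 by simp]
    apply Real.sqrt_le_sqrt
    have hl2 : Real.log 2 ≤ Real.log n := Real.log_le_log (by norm_num) hn2
    nlinarith [Real.log_two_gt_d9]
  set s : ℝ := Real.sqrt ((n : ℝ) * Real.log n)
  have hs0 : (0:ℝ) ≤ s := by linarith
  -- split the cardinality
  have hsplit : ((F ∩ Finset.Icc 1 xF).card : ℝ) + ((F ∩ Finset.Icc (xF + 1) n).card : ℝ)
      = (F.card : ℝ) := by
    have hdis : Disjoint (F ∩ Finset.Icc 1 xF) (F ∩ Finset.Icc (xF + 1) n) := by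
      apply Finset.disjoint_left.mpr
      intro t ht1 ht2
      simp only [Finset.mem_inter, Finset.mem_Icc] at ht1 ht2
      omega
    have hun : (F ∩ Finset.Icc 1 xF) ∪ (F ∩ Finset.Icc (xF + 1) n) = F := by
      rw [← Finset.inter_union_distrib_left]
      apply Finset.inter_eq_left.mpr
      intro t ht
      have := Finset.mem_Icc.mp (hF ht)
      simp only [Finset.mem_union, Finset.mem_Icc]
      omega
    rw [← Nat.cast_add, ← Finset.card_union_of_disjoint hdis, hun]
  -- balance at xF and n
  have hbx := hbal xF hxF
  have hbn := hbal n (Finset.mem_Icc.mpr ⟨by omega, le_refl n⟩)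
  rw [Finset.inter_eq_left.mpr hF] at hbn
  rw [abs_le] at hbx hbn
  -- floor estimates
  have hflx1 : ((xF:ℝ)) - 1 ≤ 2 * ((xF / 2 : ℕ) : ℝ) := by
    have h1 : xF ≤ 2 * (xF / 2) + 1 := by omega
    have := (Nat.cast_le (α := ℝ)).mpr h1
    push_cast at this; linarith
  have hflx2 : 2 * ((xF / 2 : ℕ) : ℝ) ≤ (xF:ℝ) := by
    have h1 : 2 * (xF / 2) ≤ xF := by omega
    have := (Nat.cast_le (α := ℝ)).mpr h1
    push_cast at this; linarith
  have hfln1 : ((n:ℝ)) - 1 ≤ 2 * ((n / 2 : ℕ) : ℝ) := by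
    have h1 : n ≤ 2 * (n / 2) + 1 := by omega
    have := (Nat.cast_le (α := ℝ)).mpr h1
    push_cast at this; linarith
  have hfln2 : 2 * ((n / 2 : ℕ) : ℝ) ≤ (n:ℝ) := by
    have h1 : 2 * (n / 2) ≤ n := by omega
    have := (Nat.cast_le (α := ℝ)).mpr h1
    push_cast at this; linarith
  have hA1 : ((F ∩ Finset.Icc 1 xF).card : ℝ) ≤ (xF:ℝ)/2 + s + 1/2 := by
    have := hbx.2; linarith
  have hA2 : (xF:ℝ)/2 - s - 1/2 ≤ ((F ∩ Finset.Icc 1 xF).card : ℝ) := by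
    have := hbx.1; linarith
  have hT1 : ((F.card : ℕ) : ℝ) ≤ (n:ℝ)/2 + s + 1/2 := by
    have := hbn.2; linarith
  have hT2 : (n:ℝ)/2 - s - 1/2 ≤ ((F.card : ℕ) : ℝ) := by
    have := hbn.1; linarith
  -- clear denominators in the cut condition
  have hD0 : ((F ∩ Finset.Icc 1 xF).card : ℝ) * q ≤
      ((n:ℝ) - xF - ((F ∩ Finset.Icc (xF + 1) n).card : ℝ)) * p := by
    have h1 : ((F ∩ Finset.Icc 1 xF).card : ℝ) / p ≤
        ((n:ℝ) - xF - ((F ∩ Finset.Icc (xF + 1) n).card : ℝ)) / q := by linarith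
    exact (div_le_div_iff₀ hp0 hq0).mp h1
  have hD1 : ((n:ℝ) - xF - ((F ∩ Finset.Icc (xF + 1) n).card : ℝ)) * p <
      (((F ∩ Finset.Icc 1 xF).card : ℝ) + 1) * q := by
    have h1 : ((n:ℝ) - xF - ((F ∩ Finset.Icc (xF + 1) n).card : ℝ)) / q <
        (((F ∩ Finset.Icc 1 xF).card : ℝ) + 1) / p := by
      rw [add_div]; linarith
    exact (div_lt_div_iff₀ hq0 hp0).mp h1
  -- key bound
  have hkey : |((p:ℝ) + q) * xF - p * n| ≤ 8 * s * ((p:ℝ) + q) :=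
    cut_aux (p:ℝ) q xF n _ _ _ s hp0 hq0 hs1 hsplit hA1 hA2 hT1 hT2 hD0 hD1
  have hpq0 : (0:ℝ) < (p:ℝ) + q := by linarith
  have hxe : (xF:ℝ) - (p:ℝ) / ((p:ℝ) + q) * n = (((p:ℝ) + q) * xF - p * n) / ((p:ℝ) + q) := by
    field_simp
  have hm0 : (0:ℝ) < ((min p q : ℕ) : ℝ) := by
    exact_mod_cast Nat.cast_pos.mpr (lt_min hp hq)
  have hmle : ((min p q : ℕ) : ℝ) ≤ (p:ℝ) + q := by
    have h1 : min p q ≤ p := min_le_left _ _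
    have : ((min p q : ℕ) : ℝ) ≤ (p:ℝ) := by exact_mod_cast h1
    linarith
  rw [hxe, abs_div, abs_of_pos hpq0, div_le_iff₀ hpq0]
  calc |((p:ℝ) + q) * xF - p * n| ≤ 8 * s * ((p:ℝ) + q) := hkey
    _ ≤ 8 * ((p:ℝ) + q) / ((min p q : ℕ) : ℝ) * s * ((p:ℝ) + q) := by
        rw [div_mul_eq_mul_div, div_mul_eq_mul_div, le_div_iff₀ hm0]
        have h8 : (0:ℝ) ≤ 8 * s * ((p:ℝ) + q) := by positivity
        nlinarith [mul_le_mul_of_nonneg_left hmle h8]
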